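/- Let (ξᵢ)_{i∈ℕ} be real numbers with Σ_{i} |ξᵢ| < ∞, let (λᵢ)_{i∈ℕ} be pairwise distinct positive real numbers, and let (φᵢ)_{i∈ℕ} be real numbers. Then the series X(t) = Σ_{i} ξᵢ·cos(λᵢ·t + φᵢ) converges absolutely and uniformly on ℝ, and for every τ ∈ ℝ, (1/T)·∫₀^T X(t)·X(t + τ) dt → Σ_{i} (ξᵢ²/2)·cos(λᵢ·τ) as T → ∞. -/

import Mathlib

open Real Filter Finset intervalIntegral MeasureTheory

lemma intCos (ω θ T : ℝ) (hω : ω ≠ 0) :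
    ∫ t in (0:ℝ)..T, Real.cos (ω * t + θ) = (Real.sin (ω * T + θ) - Real.sin θ) / ω := by
  rw [intervalIntegral.integral_comp_mul_add Real.cos hω θ, integral_cos]
  simp [smul_eq_mul, div_eq_inv_mul]

lemma intCos_bound (ω θ T : ℝ) (hω : ω ≠ 0) :
    |∫ t in (0:ℝ)..T, Real.cos (ω * t + θ)| ≤ 2 / |ω| := by
  rw [intCos ω θ T hω, abs_div]
  gcongr
  calc |Real.sin (ω * T + θ) - Real.sin θ| ≤ |Real.sin (ω * T + θ)| + |Real.sin θ| := abs_sub _ _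
    _ ≤ 1 + 1 := add_le_add (Real.abs_sin_le_one _) (Real.abs_sin_le_one _)
    _ = 2 := by norm_num

lemma splitCC (a b α β T : ℝ) :
    ∫ t in (0:ℝ)..T, Real.cos (a*t+α) * Real.cos (b*t+β)
    = (1/2) * ((∫ t in (0:ℝ)..T, Real.cos ((a-b)*t+(α-β)))
        + ∫ t in (0:ℝ)..T, Real.cos ((a+b)*t+(α+β))) := by
  have h1 : IntervalIntegrable (fun t => Real.cos ((a-b)*t+(α-β))) volume 0 T :=
    (Real.continuous_cos.comp (by continuity)).intervalIntegrable _ _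
  have h2 : IntervalIntegrable (fun t => Real.cos ((a+b)*t+(α+β))) volume 0 T :=
    (Real.continuous_cos.comp (by continuity)).intervalIntegrable _ _
  rw [← intervalIntegral.integral_add h1 h2, ← intervalIntegral.integral_const_mul]
  apply intervalIntegral.integral_congr
  intro t _
  have h := Real.two_mul_cos_mul_cos (a*t+α) (b*t+β)
  have e1 : (a*t+α) - (b*t+β) = (a-b)*t+(α-β) := by ring
  have e2 : (a*t+α) + (b*t+β) = (a+b)*t+(α+β) := by ring
  rw [e1, e2] at h
  linarith

lemma offdiag_bound (a b α β : ℝ) (ha : 0 < a) (hb : 0 < b) (hab : a ≠ b) :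
    ∀ T : ℝ, |∫ t in (0:ℝ)..T, Real.cos (a*t+α) * Real.cos (b*t+β)|
      ≤ 1/|a-b| + 1/(a+b) := by
  intro T
  rw [splitCC]
  have hd : a - b ≠ 0 := sub_ne_zero.2 hab
  have hs : a + b ≠ 0 := by positivity
  have H1 := intCos_bound (a-b) (α-β) T hd
  have H2 := intCos_bound (a+b) (α+β) T hs
  rw [abs_of_pos (by positivity : (0:ℝ) < a + b)] at H2
  calc |(1/2) * (_ + _)| ≤ (1/2) * (|∫ t in (0:ℝ)..T, Real.cos ((a-b)*t+(α-β))|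
        + |∫ t in (0:ℝ)..T, Real.cos ((a+b)*t+(α+β))|) := by
        rw [abs_mul]; rw [abs_of_pos (by norm_num : (0:ℝ) < 1/2)]
        gcongr; exact abs_add_le _ _
    _ ≤ (1/2) * (2/|a-b| + 2/(a+b)) := by gcongr
    _ = 1/|a-b| + 1/(a+b) := by ring

lemma diag_bound (a α β : ℝ) (ha : 0 < a) :
    ∀ T : ℝ, |(∫ t in (0:ℝ)..T, Real.cos (a*t+α) * Real.cos (a*t+β))
      - T * Real.cos (α-β) / 2| ≤ 1/(2*a) := by
  intro T
  rw [splitCC]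
  have h0 : (∫ t in (0:ℝ)..T, Real.cos ((a-a)*t+(α-β))) = T * Real.cos (α-β) := by
    simp
  have hs : a + a ≠ 0 := by positivity
  have H2 := intCos_bound (a+a) (α+β) T hs
  rw [abs_of_pos (by positivity : (0:ℝ) < a + a)] at H2
  rw [h0]
  have : (1/2) * (T * Real.cos (α-β) + ∫ t in (0:ℝ)..T, Real.cos ((a+a)*t+(α+β)))
      - T * Real.cos (α-β) / 2 = (1/2) * ∫ t in (0:ℝ)..T, Real.cos ((a+a)*t+(α+β)) := by
    ring
  rw [this, abs_mul, abs_of_pos (by norm_num : (0:ℝ) < 1/2)]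
  calc (1/2) * |∫ t in (0:ℝ)..T, Real.cos ((a+a)*t+(α+β))| ≤ (1/2) * (2/(a+a)) := by gcongr
    _ = 1/(2*a) := by ring

set_option maxHeartbeats 1000000 in
theorem time_average_autocovariance_series
    (ξ φ : ℕ → ℝ) (l : ℕ → ℝ)
    (hsum : Summable fun i => |ξ i|)
    (hlpos : ∀ i, 0 < l i) (hldist : Function.Injective l) :
    (∀ t : ℝ, Summable fun i => |ξ i * Real.cos (l i * t + φ i)|) ∧
    TendstoUniformly
      (fun N : ℕ => fun t : ℝ => ∑ i ∈ Finset.range N, ξ i * Real.cos (l i * t + φ i))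
      (fun t : ℝ => ∑' i, ξ i * Real.cos (l i * t + φ i)) atTop ∧
    (∀ τ : ℝ,
      Tendsto
        (fun T : ℝ =>
          (1 / T) * ∫ t in (0:ℝ)..T,
            (∑' i, ξ i * Real.cos (l i * t + φ i)) *
              (∑' i, ξ i * Real.cos (l i * (t + τ) + φ i)))
        atTop (nhds (∑' i, (ξ i ^ 2 / 2) * Real.cos (l i * τ)))) := by
  have habs : ∀ (i : ℕ) (u : ℝ), |ξ i * Real.cos u| ≤ |ξ i| := fun i u => by
    rw [abs_mul]
    exact mul_le_of_le_one_right (abs_nonneg _) (Real.abs_cos_le_one _)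
  have S1 : ∀ t : ℝ, Summable fun i => |ξ i * Real.cos (l i * t + φ i)| := fun t =>
    Summable.of_nonneg_of_le (fun i => abs_nonneg _) (fun i => habs i _) hsum
  refine ⟨S1, ?_, ?_⟩
  · exact tendstoUniformly_tsum_nat hsum fun n x => by
      rw [Real.norm_eq_abs]; exact habs n _
  intro τ
  classical
  set A : ℕ → ℝ → ℝ := fun i t => ξ i * Real.cos (l i * t + φ i) with hA
  have hAabs : ∀ i t, |A i t| ≤ |ξ i| := fun i t => habs i _
  have hAsm : ∀ t : ℝ, Summable fun i => ‖A i t‖ := fun t => by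
    simpa only [Real.norm_eq_abs] using S1 t
  have hprod : ∀ t : ℝ, (∑' i, A i t) * (∑' i, A i (t + τ))
      = ∑' p : ℕ × ℕ, A p.1 t * A p.2 (t + τ) :=
    fun t => tsum_mul_tsum_of_summable_norm (hAsm t) (hAsm (t + τ))
  have hAcont : ∀ i, Continuous (A i) := fun i =>
    continuous_const.mul (Real.continuous_cos.comp (by continuity))
  have hnn : Summable fun i => ‖ξ i‖₊ := by
    rw [← NNReal.summable_coe]
    simpa [coe_nnnorm, Real.norm_eq_abs] using hsum
  have hnne : (∑' i, (‖ξ i‖₊ : ENNReal)) ≠ ⊤ := ENNReal.tsum_coe_ne_top_iff_summable.2 hnn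
  -- interchange of sum and integral
  have key : ∀ T : ℝ, 0 ≤ T →
      (∫ t in (0:ℝ)..T, (∑' i, A i t) * (∑' i, A i (t + τ)))
        = ∑' p : ℕ × ℕ, ∫ t in (0:ℝ)..T, A p.1 t * A p.2 (t + τ) := by
    intro T hT
    have hmeas : ∀ p : ℕ × ℕ, AEStronglyMeasurable (fun t : ℝ => A p.1 t * A p.2 (t + τ))
        (volume.restrict (Set.Ioc (0:ℝ) T)) := fun p =>
      ((hAcont p.1).mul ((hAcont p.2).comp (by continuity))).aestronglyMeasurable
    have hfin : (∑' p : ℕ × ℕ, ∫⁻ t, ‖A p.1 t * A p.2 (t + τ)‖₊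
        ∂(volume.restrict (Set.Ioc (0:ℝ) T))) ≠ ⊤ := by
      have hb : ∀ p : ℕ × ℕ, (∫⁻ t, ‖A p.1 t * A p.2 (t + τ)‖₊
          ∂(volume.restrict (Set.Ioc (0:ℝ) T)))
          ≤ ((‖ξ p.1‖₊ : ENNReal) * ‖ξ p.2‖₊) * ENNReal.ofReal T := by
        intro p
        have hle : ∀ t : ℝ, (‖A p.1 t * A p.2 (t + τ)‖₊ : ENNReal)
            ≤ ((‖ξ p.1‖₊ * ‖ξ p.2‖₊ : NNReal) : ENNReal) := by
          intro t
          rw [ENNReal.coe_le_coe, ← NNReal.coe_le_coe]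
          push_cast [coe_nnnorm]
          rw [Real.norm_eq_abs, Real.norm_eq_abs, Real.norm_eq_abs, abs_mul]
          exact mul_le_mul (hAabs _ _) (hAabs _ _) (abs_nonneg _) (abs_nonneg _)
        calc (∫⁻ t, ‖A p.1 t * A p.2 (t + τ)‖₊ ∂(volume.restrict (Set.Ioc (0:ℝ) T)))
            ≤ ∫⁻ _, ((‖ξ p.1‖₊ * ‖ξ p.2‖₊ : NNReal) : ENNReal)
              ∂(volume.restrict (Set.Ioc (0:ℝ) T)) := lintegral_mono fun t => hle t
          _ = ((‖ξ p.1‖₊ * ‖ξ p.2‖₊ : NNReal) : ENNReal) * volume (Set.Ioc (0:ℝ) T) := by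
              rw [lintegral_const, Measure.restrict_apply MeasurableSet.univ, Set.univ_inter]
          _ = ((‖ξ p.1‖₊ : ENNReal) * ‖ξ p.2‖₊) * ENNReal.ofReal T := by
              rw [Real.volume_Ioc, sub_zero, ENNReal.coe_mul]
      refine ne_top_of_le_ne_top ?_ (ENNReal.tsum_le_tsum hb)
      have : (∑' p : ℕ × ℕ, ((‖ξ p.1‖₊ : ENNReal) * ‖ξ p.2‖₊) * ENNReal.ofReal T)
          = ((∑' i, (‖ξ i‖₊ : ENNReal)) * (∑' i, (‖ξ i‖₊ : ENNReal))) * ENNReal.ofReal T := by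
        rw [ENNReal.tsum_mul_right]
        congr 1
        rw [ENNReal.tsum_prod']
        dsimp only
        simp_rw [ENNReal.tsum_mul_left]
        rw [ENNReal.tsum_mul_right]
      rw [this]
      exact ENNReal.mul_ne_top (ENNReal.mul_ne_top hnne hnne) ENNReal.ofReal_ne_top
    calc (∫ t in (0:ℝ)..T, (∑' i, A i t) * (∑' i, A i (t + τ)))
        = ∫ t in Set.Ioc (0:ℝ) T, (∑' i, A i t) * (∑' i, A i (t + τ)) :=
          intervalIntegral.integral_of_le hT
      _ = ∫ t in Set.Ioc (0:ℝ) T, ∑' p : ℕ × ℕ, A p.1 t * A p.2 (t + τ) :=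
          integral_congr_ae (Eventually.of_forall fun t => hprod t)
      _ = ∑' p : ℕ × ℕ, ∫ t in Set.Ioc (0:ℝ) T, A p.1 t * A p.2 (t + τ) :=
          integral_tsum hmeas hfin
      _ = ∑' p : ℕ × ℕ, ∫ t in (0:ℝ)..T, A p.1 t * A p.2 (t + τ) :=
          tsum_congr fun p => (intervalIntegral.integral_of_le hT).symm
  -- canonical form of each integral
  have hint : ∀ (p : ℕ × ℕ) (T : ℝ), (∫ t in (0:ℝ)..T, A p.1 t * A p.2 (t + τ))
      = ξ p.1 * ξ p.2 * ∫ t in (0:ℝ)..T,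
          Real.cos (l p.1 * t + φ p.1) * Real.cos (l p.2 * t + (l p.2 * τ + φ p.2)) := by
    intro p T
    rw [← intervalIntegral.integral_const_mul]
    apply intervalIntegral.integral_congr
    intro t _
    show ξ p.1 * Real.cos (l p.1 * t + φ p.1) * (ξ p.2 * Real.cos (l p.2 * (t + τ) + φ p.2)) = _
    rw [show l p.2 * (t + τ) + φ p.2 = l p.2 * t + (l p.2 * τ + φ p.2) from by ring]
    ring
  set G : ℝ → ℕ × ℕ → ℝ := fun T p => (1/T) * (ξ p.1 * ξ p.2 * ∫ t in (0:ℝ)..T,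
      Real.cos (l p.1 * t + φ p.1) * Real.cos (l p.2 * t + (l p.2 * τ + φ p.2))) with hG
  set g : ℕ × ℕ → ℝ := fun p => if p.1 = p.2 then (ξ p.1 ^ 2 / 2) * Real.cos (l p.1 * τ)
      else 0 with hg
  -- pointwise limits
  have hGp : ∀ p : ℕ × ℕ, Tendsto (fun T => G T p) atTop (nhds (g p)) := by
    rintro ⟨i, j⟩
    by_cases hp : i = j
    · subst hp
      have hC := diag_bound (l i) (φ i) (l i * τ + φ i) (hlpos i)
      have hgval : g (i, i) = (ξ i ^ 2 / 2) * Real.cos (l i * τ) := by simp [hg]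
      have hdiff : Tendsto (fun T => G T (i, i) - g (i, i)) atTop (nhds 0) := by
        have h0 : Tendsto (fun T : ℝ => (ξ i ^ 2 * (1/(2 * l i))) * (1/T)) atTop (nhds 0) := by
          have h0' := tendsto_inv_atTop_zero.const_mul (ξ i ^ 2 * (1/(2 * l i)))
          rw [mul_zero] at h0'
          simpa [one_div] using h0'
        refine squeeze_zero_norm' ?_ h0
        filter_upwards [eventually_ge_atTop (1:ℝ)] with T hT
        have hT0 : (0:ℝ) < T := lt_of_lt_of_le one_pos hT
        have hcos : Real.cos (φ i - (l i * τ + φ i)) = Real.cos (l i * τ) := by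
          rw [show φ i - (l i * τ + φ i) = -(l i * τ) from by ring, Real.cos_neg]
        have heq : G T (i, i) - g (i, i) = (1/T) * (ξ i ^ 2 *
            ((∫ t in (0:ℝ)..T, Real.cos (l i * t + φ i) *
              Real.cos (l i * t + (l i * τ + φ i)))
              - T * Real.cos (φ i - (l i * τ + φ i)) / 2)) := by
          rw [hgval, hcos]
          simp only [hG]
          field_simp
        rw [heq, Real.norm_eq_abs, abs_mul, abs_mul,
          abs_of_pos (by positivity : (0:ℝ) < 1/T), abs_of_nonneg (sq_nonneg (ξ i))]
        rw [show (ξ i ^ 2 * (1/(2 * l i))) * (1/T) = (1/T) * (ξ i ^ 2 * (1/(2 * l i)))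
          from by ring]
        gcongr
        exact hC T
      have := hdiff.add_const (g (i, i))
      simpa using this
    · have hne : l i ≠ l j := fun h => hp (hldist h)
      have hC := offdiag_bound (l i) (l j) (φ i) (l j * τ + φ j) (hlpos i) (hlpos j) hne
      have hgval : g (i, j) = 0 := by simp [hg, hp]
      rw [hgval]
      have h0 : Tendsto (fun T : ℝ =>
          (|ξ i * ξ j| * (1/|l i - l j| + 1/(l i + l j))) * (1/T)) atTop (nhds 0) := by
        have h0' := tendsto_inv_atTop_zero.const_mul
          (|ξ i * ξ j| * (1/|l i - l j| + 1/(l i + l j)))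
        rw [mul_zero] at h0'
        simpa [one_div] using h0'
      refine squeeze_zero_norm' ?_ h0
      filter_upwards [eventually_ge_atTop (1:ℝ)] with T hT
      have hT0 : (0:ℝ) < T := lt_of_lt_of_le one_pos hT
      simp only [hG]
      rw [Real.norm_eq_abs, abs_mul, abs_mul,
        abs_of_pos (by positivity : (0:ℝ) < 1/T),
        show (|ξ i * ξ j| * (1/|l i - l j| + 1/(l i + l j))) * (1/T)
          = (1/T) * (|ξ i * ξ j| * (1/|l i - l j| + 1/(l i + l j))) from by ring]
      gcongr
      exact hC T
  -- uniform bound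
  have hbd : ∀ᶠ T : ℝ in atTop, ∀ p : ℕ × ℕ, ‖G T p‖ ≤ |ξ p.1| * |ξ p.2| := by
    filter_upwards [eventually_ge_atTop (1:ℝ)] with T hT p
    have hT0 : (0:ℝ) < T := lt_of_lt_of_le one_pos hT
    have hI : |∫ t in (0:ℝ)..T,
        Real.cos (l p.1 * t + φ p.1) * Real.cos (l p.2 * t + (l p.2 * τ + φ p.2))| ≤ T := by
      have := intervalIntegral.norm_integral_le_of_norm_le_const (C := 1) (a := (0:ℝ)) (b := T)
        (f := fun t => Real.cos (l p.1 * t + φ p.1) * Real.cos (l p.2 * t + (l p.2 * τ + φ p.2)))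
        (fun x _ => by
          rw [Real.norm_eq_abs, abs_mul]
          exact mul_le_one₀ (Real.abs_cos_le_one _) (abs_nonneg _) (Real.abs_cos_le_one _))
      rw [Real.norm_eq_abs] at this
      simpa [abs_of_pos hT0] using this
    simp only [hG]
    rw [Real.norm_eq_abs, abs_mul, abs_mul, abs_of_pos (by positivity : (0:ℝ) < 1/T)]
    calc (1/T) * (|ξ p.1 * ξ p.2| * |∫ t in (0:ℝ)..T,
          Real.cos (l p.1 * t + φ p.1) * Real.cos (l p.2 * t + (l p.2 * τ + φ p.2))|)
        ≤ (1/T) * (|ξ p.1 * ξ p.2| * T) := by gcongr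
      _ = |ξ p.1| * |ξ p.2| := by rw [abs_mul]; field_simp
  have hbsum : Summable fun p : ℕ × ℕ => |ξ p.1| * |ξ p.2| :=
    hsum.mul_of_nonneg hsum (fun i => abs_nonneg _) (fun i => abs_nonneg _)
  have hlim : Tendsto (fun T => ∑' p : ℕ × ℕ, G T p) atTop (nhds (∑' p : ℕ × ℕ, g p)) :=
    tendsto_tsum_of_dominated_convergence hbsum hGp hbd
  -- identify the limit
  have hgg : (∑' p : ℕ × ℕ, g p) = ∑' i, (ξ i ^ 2 / 2) * Real.cos (l i * τ) := by
    rw [← Function.Injective.tsum_eq (g := fun i : ℕ => (i, i))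
      (fun a b h => (Prod.ext_iff.1 h).1) ?_]
    · exact tsum_congr fun i => by simp [hg]
    · intro p hp
      rcases p with ⟨i, j⟩
      have : i = j := by
        by_contra h
        exact hp (by simp [hg, h])
      exact ⟨i, by simp [this]⟩
  -- conclude
  have heq : (fun T : ℝ => (1/T) * ∫ t in (0:ℝ)..T, (∑' i, A i t) * (∑' i, A i (t + τ)))
      =ᶠ[atTop] fun T => ∑' p : ℕ × ℕ, G T p := by
    filter_upwards [eventually_gt_atTop (0:ℝ)] with T hT
    rw [key T hT.le, ← tsum_mul_left]
    exact tsum_congr fun p => by rw [hint p T]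
  rw [← hgg]
  exact hlim.congr' heq.symm
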